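/- Let w₁ = (d₁¹,…,d_N¹) and w₂ = (d₁²,…,d_N²) with all entries positive, and let w = min(w₁,w₂) be defined componentwise by d_i = min(d_i¹, d_i²). If μ₁, μ₂, μ are the reflector measures of the discrete reflectors σ_{w₁}, σ_{w₂}, σ_w respectively, then μ(P_i) ≤ max(μ₁(P_i), μ₂(P_i)) for all 1 ≤ i ≤ N. -/

import Mathlib

noncomputable section

open MeasureTheory Metric Set Filter Topology
attribute [local instance] Classical.propDecidable

/-- Real inner product on `ℝ³`. -/
noncomputable def rinner (x y : EuclideanSpace ℝ (Fin 3)) : ℝ := inner ℝ x y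

/-- Euclidean 3-space. -/
abbrev E3 : Type := EuclideanSpace ℝ (Fin 3)

/-- The unit sphere `S²` in `ℝ³`. -/
def sphere2 : Set E3 := Metric.sphere (0 : E3) 1

/-- Unit vector `m = P/OP` in the direction of `P`. -/
noncomputable def axisDir (P : E3) : E3 := ‖P‖⁻¹ • P

/-- Eccentricity `ε = √(1 + d²/OP²) − d/OP` of the ellipsoid `E_d(P)`. -/
noncomputable def ecc (P : E3) (d : ℝ) : ℝ :=
  Real.sqrt (1 + d ^ 2 / ‖P‖ ^ 2) - d / ‖P‖

/-- Polar radius `ρ_d(x) = d/(1 − ε x·m)` of the ellipsoid `E_d(P)`. -/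
noncomputable def polarRadius (P : E3) (d : ℝ) (x : E3) : ℝ :=
  d / (1 - ecc P d * rinner x (axisDir P))

/-- The constant `c_δ = √(1 + δ²) − δ`. -/
noncomputable def cconst (δ : ℝ) : ℝ := Real.sqrt (1 + δ ^ 2) - δ

/-- Outer unit normal `(x − εm)/|x − εm|` of the ellipsoid `E_d(P)` at the point `ρ_d(x)x`. -/
noncomputable def normalVec (P : E3) (d : ℝ) (x : E3) : E3 :=
  ‖x - ecc P d • axisDir P‖⁻¹ • (x - ecc P d • axisDir P)

/-- The ellipsoid `E_d(P)` supports the surface `{ρ(x)x : x ∈ closure Ω}` at `ρ(x₀)x₀`. -/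
def IsSupportingAt (Ω : Set E3) (ρ : E3 → ℝ) (P : E3) (d : ℝ) (x₀ : E3) : Prop :=
  P ≠ 0 ∧ 0 < d ∧ (∀ x ∈ closure Ω, ρ x ≤ polarRadius P d x) ∧
    ρ x₀ = polarRadius P d x₀

/-- `{ρ(x)x : x ∈ closure Ω}` is a reflector from `closure Ω` to the target `D`. -/
def IsReflector (Ω D : Set E3) (ρ : E3 → ℝ) : Prop :=
  (∀ x ∈ closure Ω, 0 < ρ x) ∧
  ∀ x₀ ∈ closure Ω, ∃ P ∈ D, ∃ d : ℝ, IsSupportingAt Ω ρ P d x₀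

/-- Tracing set `τ_σ(E)`: directions reflected into `E`. -/
def tracing (Ω : Set E3) (ρ : E3 → ℝ) (E : Set E3) : Set E3 :=
  {x | x ∈ closure Ω ∧ ∃ P ∈ E, ∃ d : ℝ, IsSupportingAt Ω ρ P d x}

/-- The class `A(δ)`: reflectors all of whose points admit a supporting ellipsoid with
`d ≥ δ M`. -/
def InClassA (Ω D : Set E3) (ρ : E3 → ℝ) (δ M : ℝ) : Prop :=
  IsReflector Ω D ρ ∧
  ∀ x₀ ∈ closure Ω, ∃ P ∈ D, ∃ d : ℝ, δ * M ≤ d ∧ IsSupportingAt Ω ρ P d x₀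

/-- The boundary `∂Ω` of `Ω` relative to the sphere `S²`. -/
def sphFrontier (Ω : Set E3) : Set E3 := closure Ω ∩ closure (sphere2 \ Ω)

/-- `D` is contained in a plane of `ℝ³`. -/
def InPlane (D : Set E3) : Prop :=
  ∃ v : E3, v ≠ 0 ∧ ∃ c : ℝ, ∀ P ∈ D, rinner P v = c

/-- The set `S` of directions traced to two distinct target points. -/
def ambigSet (Ω D : Set E3) (ρ : E3 → ℝ) : Set E3 :=
  {x | x ∈ closure Ω ∧ ∃ P₁ ∈ D, ∃ P₂ ∈ D, P₁ ≠ P₂ ∧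
    x ∈ tracing Ω ρ {P₁} ∧ x ∈ tracing Ω ρ {P₂}}

/-- A canonical selection of the outer unit normal `ν(x)` of the reflector; at every point
where the supporting ellipsoid is unique (a.e. point) this is the normal of the
supporting ellipsoid. -/
noncomputable def nuSel (Ω D : Set E3) (ρ : E3 → ℝ) (x : E3) : E3 :=
  if h : ∃ p : E3 × ℝ, p.1 ∈ D ∧ IsSupportingAt Ω ρ p.1 p.2 x then
    normalVec h.choose.1 h.choose.2 x
  else 0

/-- A canonical selection of the reflector map `𝒩_σ(x)`; at every point with a unique
supporting ellipsoid (a.e. point) this is the target point the ray `x` is reflected to. -/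
noncomputable def reflMapSel (Ω D : Set E3) (ρ : E3 → ℝ) (x : E3) : E3 :=
  if h : ∃ p : E3 × ℝ, p.1 ∈ D ∧ IsSupportingAt Ω ρ p.1 p.2 x then h.choose.1 else 0

/-- The reflector measure `μ(E) = ∫_{τ_σ(E)} f(x) (x·ν(x))/ρ(x)² dx`,
the irradiance received on `E ⊆ D`. -/
noncomputable def reflMeasure (Ω D : Set E3) (ρ f : E3 → ℝ) (E : Set E3) : ℝ :=
  ∫ x in tracing Ω ρ E, f x * rinner x (nuSel Ω D ρ x) / ρ x ^ 2 ∂μH[2]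

/-- Polar radius of the discrete reflector given by `w = (d₁,…,d_N)`:
`ρ_w(x) = min_i ρ_{d_i}(x)`. -/
noncomputable def discRho {N : ℕ} (P : Fin N → E3) (w : Fin N → ℝ) (x : E3) : ℝ :=
  ⨅ i, polarRadius (P i) (w i) x

/-- Tracing set of the discrete reflector: directions reflected to some `P_i`, `i ∈ I`. -/
def discTracing {N : ℕ} (Ω : Set E3) (P : Fin N → E3) (w : Fin N → ℝ)
    (I : Set (Fin N)) : Set E3 :=
  {x | x ∈ closure Ω ∧ ∃ i ∈ I, discRho P w x = polarRadius (P i) (w i) x}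

/-- Canonical selection of the outer unit normal of the discrete reflector; at every
point where the minimum is attained at a unique `i` (a.e. point) it is the normal of
the supporting ellipsoid `E_{d_i}(P_i)`. -/
noncomputable def discNu {N : ℕ} (P : Fin N → E3) (w : Fin N → ℝ) (x : E3) : E3 :=
  if h : ∃ i, discRho P w x = polarRadius (P i) (w i) x then
    normalVec (P h.choose) (w h.choose) x
  else 0

/-- Reflector measure of the discrete reflector:
`μ_w({P_i : i ∈ I}) = ∫_{τ_{σ_w}(I)} f(x)(x·ν_w(x))/ρ_w(x)² dx`. -/
noncomputable def discMu {N : ℕ} (Ω : Set E3) (P : Fin N → E3) (w : Fin N → ℝ)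
    (f : E3 → ℝ) (I : Set (Fin N)) : ℝ :=
  ∫ x in discTracing Ω P w I, f x * rinner x (discNu P w x) / discRho P w x ^ 2 ∂μH[2]

section AuxLemmas

open Real

lemma norm_pos_of_ne' {P : E3} (hP : P ≠ 0) : 0 < ‖P‖ := norm_pos_iff.2 hP

lemma norm_axisDir {P : E3} (hP : P ≠ 0) : ‖axisDir P‖ = 1 := by
  rw [axisDir, norm_smul, norm_inv, norm_norm,
    inv_mul_cancel₀ (norm_ne_zero_iff.2 hP)]

lemma abs_rinner_axisDir_le {P x : E3} (hP : P ≠ 0) (hx : ‖x‖ = 1) :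
    |rinner x (axisDir P)| ≤ 1 := by
  have h := abs_real_inner_le_norm x (axisDir P)
  rw [hx, norm_axisDir hP, one_mul] at h
  exact h

lemma ecc_eq {P : E3} (hP : P ≠ 0) (d : ℝ) :
    ecc P d = (Real.sqrt (‖P‖ ^ 2 + d ^ 2) - d) / ‖P‖ := by
  have ha : 0 < ‖P‖ := norm_pos_of_ne' hP
  have h1 : 1 + d ^ 2 / ‖P‖ ^ 2 = (‖P‖ ^ 2 + d ^ 2) / ‖P‖ ^ 2 := by
    field_simp
  rw [ecc, h1, Real.sqrt_div (by positivity), Real.sqrt_sq ha.le, sub_div]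

lemma sqrt_gt_self {a d : ℝ} (ha : 0 < a) : d < Real.sqrt (a ^ 2 + d ^ 2) := by
  rcases le_or_gt d 0 with h | h
  · exact lt_of_le_of_lt h (Real.sqrt_pos.2 (by positivity))
  · have h2 : Real.sqrt (d ^ 2) < Real.sqrt (a ^ 2 + d ^ 2) :=
      Real.sqrt_lt_sqrt (by positivity) (by nlinarith)
    rwa [Real.sqrt_sq h.le] at h2

lemma ecc_pos {P : E3} (hP : P ≠ 0) (d : ℝ) : 0 < ecc P d := by
  have ha := norm_pos_of_ne' hP
  rw [ecc_eq hP]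
  exact div_pos (sub_pos.2 (sqrt_gt_self ha)) ha

lemma ecc_lt_one {P : E3} (hP : P ≠ 0) {d : ℝ} (hd : 0 < d) : ecc P d < 1 := by
  have ha := norm_pos_of_ne' hP
  rw [ecc_eq hP, div_lt_one ha]
  have h1 : Real.sqrt (‖P‖ ^ 2 + d ^ 2) < Real.sqrt ((‖P‖ + d) ^ 2) :=
    Real.sqrt_lt_sqrt (by positivity) (by nlinarith)
  rw [Real.sqrt_sq (by positivity)] at h1
  linarith

lemma denom_pos {P x : E3} (hP : P ≠ 0) {d : ℝ} (hd : 0 < d) (hx : ‖x‖ = 1) :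
    0 < 1 - ecc P d * rinner x (axisDir P) := by
  have h1 := abs_le.1 (abs_rinner_axisDir_le hP hx)
  have h2 := ecc_pos hP d
  have h3 := ecc_lt_one hP hd
  nlinarith [h1.1, h1.2]

lemma denom_lt_two {P x : E3} (hP : P ≠ 0) {d : ℝ} (hd : 0 < d) (hx : ‖x‖ = 1) :
    1 - ecc P d * rinner x (axisDir P) < 2 := by
  have h1 := abs_le.1 (abs_rinner_axisDir_le hP hx)
  have h2 := ecc_pos hP d
  have h3 := ecc_lt_one hP hd
  nlinarith [h1.1, h1.2]

lemma polar_pos {P x : E3} (hP : P ≠ 0) {d : ℝ} (hd : 0 < d) (hx : ‖x‖ = 1) :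
    0 < polarRadius P d x :=
  div_pos hd (denom_pos hP hd hx)

lemma polar_ge_half {P x : E3} (hP : P ≠ 0) {d : ℝ} (hd : 0 < d) (hx : ‖x‖ = 1) :
    d / 2 ≤ polarRadius P d x := by
  rw [polarRadius, div_le_div_iff₀ two_pos (denom_pos hP hd hx)]
  nlinarith [denom_lt_two hP hd hx, denom_pos hP hd hx]

lemma sqrt_sq_add_pos {a d : ℝ} (ha : 0 < a) (hd : 0 < d) :
    0 < Real.sqrt (a ^ 2 + d ^ 2) := Real.sqrt_pos.2 (by positivity)

lemma one_sub_ecc_div {P : E3} (hP : P ≠ 0) {d : ℝ} (hd : 0 < d) :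
    (1 - ecc P d) / d = 2 / (‖P‖ + d + Real.sqrt (‖P‖ ^ 2 + d ^ 2)) := by
  have ha : 0 < ‖P‖ := norm_pos_of_ne' hP
  have hs0 : 0 < Real.sqrt (‖P‖ ^ 2 + d ^ 2) := sqrt_sq_add_pos ha hd
  have hsq : Real.sqrt (‖P‖ ^ 2 + d ^ 2) ^ 2 = ‖P‖ ^ 2 + d ^ 2 :=
    Real.sq_sqrt (by positivity)
  have hden : (0:ℝ) < ‖P‖ + d + Real.sqrt (‖P‖ ^ 2 + d ^ 2) := by linarith
  rw [ecc_eq hP]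
  field_simp
  nlinarith [hsq]

lemma one_add_ecc_div {P : E3} (hP : P ≠ 0) {d : ℝ} (hd : 0 < d) :
    (1 + ecc P d) / d = 2 / (d - ‖P‖ + Real.sqrt (‖P‖ ^ 2 + d ^ 2)) := by
  have ha : 0 < ‖P‖ := norm_pos_of_ne' hP
  have hs0 : 0 < Real.sqrt (‖P‖ ^ 2 + d ^ 2) := sqrt_sq_add_pos ha hd
  have hsq : Real.sqrt (‖P‖ ^ 2 + d ^ 2) ^ 2 = ‖P‖ ^ 2 + d ^ 2 :=
    Real.sq_sqrt (by positivity)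
  have hgt : ‖P‖ < Real.sqrt (‖P‖ ^ 2 + d ^ 2) := by
    have h2 : Real.sqrt (‖P‖ ^ 2) < Real.sqrt (‖P‖ ^ 2 + d ^ 2) :=
      Real.sqrt_lt_sqrt (by positivity) (by nlinarith)
    rwa [Real.sqrt_sq ha.le] at h2
  have hden : (0:ℝ) < d - ‖P‖ + Real.sqrt (‖P‖ ^ 2 + d ^ 2) := by linarith
  rw [ecc_eq hP]
  field_simp
  nlinarith [hsq]

lemma one_sub_ecc_div_anti {P : E3} (hP : P ≠ 0) {d d' : ℝ} (hd' : 0 < d')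
    (hdd : d' ≤ d) : (1 - ecc P d) / d ≤ (1 - ecc P d') / d' := by
  have ha : 0 < ‖P‖ := norm_pos_of_ne' hP
  have hd : 0 < d := lt_of_lt_of_le hd' hdd
  rw [one_sub_ecc_div hP hd, one_sub_ecc_div hP hd']
  have hs0 : 0 < Real.sqrt (‖P‖ ^ 2 + d' ^ 2) := sqrt_sq_add_pos ha hd'
  have hs0' : 0 < Real.sqrt (‖P‖ ^ 2 + d ^ 2) := sqrt_sq_add_pos ha hd
  have hmono : Real.sqrt (‖P‖ ^ 2 + d' ^ 2) ≤ Real.sqrt (‖P‖ ^ 2 + d ^ 2) :=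
    Real.sqrt_le_sqrt (by nlinarith)
  rw [div_le_div_iff₀ (by linarith) (by linarith)]
  nlinarith

lemma one_add_ecc_div_anti {P : E3} (hP : P ≠ 0) {d d' : ℝ} (hd' : 0 < d')
    (hdd : d' ≤ d) : (1 + ecc P d) / d ≤ (1 + ecc P d') / d' := by
  have ha : 0 < ‖P‖ := norm_pos_of_ne' hP
  have hd : 0 < d := lt_of_lt_of_le hd' hdd
  rw [one_add_ecc_div hP hd, one_add_ecc_div hP hd']
  have hgt : ‖P‖ < Real.sqrt (‖P‖ ^ 2 + d' ^ 2) := by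
    have h2 : Real.sqrt (‖P‖ ^ 2) < Real.sqrt (‖P‖ ^ 2 + d' ^ 2) :=
      Real.sqrt_lt_sqrt (by positivity) (by nlinarith)
    rwa [Real.sqrt_sq ha.le] at h2
  have hgt' : ‖P‖ < Real.sqrt (‖P‖ ^ 2 + d ^ 2) := by
    have h2 : Real.sqrt (‖P‖ ^ 2) < Real.sqrt (‖P‖ ^ 2 + d ^ 2) :=
      Real.sqrt_lt_sqrt (by positivity) (by nlinarith)
    rwa [Real.sqrt_sq ha.le] at h2
  have hmono : Real.sqrt (‖P‖ ^ 2 + d' ^ 2) ≤ Real.sqrt (‖P‖ ^ 2 + d ^ 2) :=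
    Real.sqrt_le_sqrt (by nlinarith)
  rw [div_le_div_iff₀ (by linarith) (by linarith)]
  nlinarith

lemma polar_mono {P x : E3} (hP : P ≠ 0) (hx : ‖x‖ = 1) {d d' : ℝ}
    (hd' : 0 < d') (hdd : d' ≤ d) :
    polarRadius P d' x ≤ polarRadius P d x := by
  have hd : 0 < d := lt_of_lt_of_le hd' hdd
  set s := rinner x (axisDir P) with hs
  have hs1 := abs_le.1 (abs_rinner_axisDir_le hP hx)
  have key : (1 - ecc P d * s) / d ≤ (1 - ecc P d' * s) / d' := by
    have e1 : ∀ dd : ℝ, 0 < dd → (1 - ecc P dd * s) / dd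
        = ((1 + s) / 2) * ((1 - ecc P dd) / dd)
          + ((1 - s) / 2) * ((1 + ecc P dd) / dd) := by
      intro dd hdd0
      field_simp
      ring
    rw [e1 d hd, e1 d' hd']
    have c1 : (0:ℝ) ≤ (1 + s) / 2 := by linarith [hs1.1]
    have c2 : (0:ℝ) ≤ (1 - s) / 2 := by linarith [hs1.2]
    exact add_le_add
      (mul_le_mul_of_nonneg_left (one_sub_ecc_div_anti hP hd' hdd) c1)
      (mul_le_mul_of_nonneg_left (one_add_ecc_div_anti hP hd' hdd) c2)
  have hpos' : 0 < (1 - ecc P d' * s) / d' := div_pos (denom_pos hP hd' hx) hd'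
  have hpos : 0 < (1 - ecc P d * s) / d := div_pos (denom_pos hP hd hx) hd
  have h2 : ((1 - ecc P d' * s) / d')⁻¹ ≤ ((1 - ecc P d * s) / d)⁻¹ :=
    inv_anti₀ hpos key
  rw [inv_div, inv_div] at h2
  simpa [polarRadius, ← hs] using h2

end AuxLemmas

section AuxLemmas2

lemma abs_cos_sub_cos_le' (a b : ℝ) : |Real.cos a - Real.cos b| ≤ |a - b| := by
  rw [Real.cos_sub_cos, abs_mul, abs_mul, abs_neg]
  have h0 : |(2:ℝ)| = 2 := by norm_num
  rw [h0]
  have h1 : |Real.sin ((a + b) / 2)| ≤ 1 := Real.abs_sin_le_one _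
  have h2 : |Real.sin ((a - b) / 2)| ≤ |(a - b) / 2| := Real.abs_sin_le_abs
  have h3 : |(a - b) / 2| = |a - b| / 2 := by
    rw [abs_div]; norm_num
  nlinarith [abs_nonneg (Real.sin ((a - b) / 2)), abs_nonneg (Real.sin ((a + b) / 2)),
    abs_nonneg (a - b)]

lemma abs_sin_sub_sin_le' (a b : ℝ) : |Real.sin a - Real.sin b| ≤ |a - b| := by
  rw [Real.sin_sub_sin, abs_mul, abs_mul]
  have h0 : |(2:ℝ)| = 2 := by norm_num
  rw [h0]
  have h1 : |Real.cos ((a + b) / 2)| ≤ 1 := Real.abs_cos_le_one _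
  have h2 : |Real.sin ((a - b) / 2)| ≤ |(a - b) / 2| := Real.abs_sin_le_abs
  have h3 : |(a - b) / 2| = |a - b| / 2 := by
    rw [abs_div]; norm_num
  nlinarith [abs_nonneg (Real.sin ((a - b) / 2)), abs_nonneg (Real.cos ((a + b) / 2)),
    abs_nonneg (a - b)]

set_option maxHeartbeats 2000000 in
lemma sphere_plane_null (v : E3) (hv : v ≠ 0) (c : ℝ) :
    μH[2] {x : E3 | ‖x‖ = 1 ∧ rinner x v = c} = 0 := by
  set S := {x : E3 | ‖x‖ = 1 ∧ rinner x v = c} with hS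
  rcases Set.eq_empty_or_nonempty S with hSe | ⟨x₁, hx₁⟩
  · simp [hSe]
  have hv2 : (0:ℝ) < ‖v‖ ^ 2 := pow_pos (norm_pos_of_ne' hv) 2
  set x₀ : E3 := (c / ‖v‖ ^ 2) • v with hx₀
  set K : Submodule ℝ E3 := (ℝ ∙ v)ᗮ with hK
  have hyK : ∀ x ∈ S, x - x₀ ∈ K := by
    intro x hx
    rw [hK, Submodule.mem_orthogonal_singleton_iff_inner_right]
    have h1 : inner ℝ v (x - x₀) = rinner x v - c / ‖v‖ ^ 2 * ‖v‖ ^ 2 := by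
      rw [inner_sub_right, real_inner_smul_right, real_inner_self_eq_norm_sq,
        real_inner_comm]
      rfl
    rw [h1, hx.2]
    field_simp
    ring
  have hnorm : ∀ x ∈ S, ‖x - x₀‖ ^ 2 = 1 - c ^ 2 / ‖v‖ ^ 2 := by
    intro x hx
    rw [norm_sub_sq_real]
    have h1 : inner ℝ x x₀ = c ^ 2 / ‖v‖ ^ 2 := by
      rw [hx₀, real_inner_smul_right]
      have : inner ℝ x v = c := hx.2
      rw [this]; ring
    have h2 : ‖x₀‖ ^ 2 = c ^ 2 / ‖v‖ ^ 2 := by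
      rw [hx₀, norm_smul, mul_pow, Real.norm_eq_abs, sq_abs, div_pow]
      field_simp
    rw [hx.1, h1, h2]; ring
  have hr0 : 0 ≤ 1 - c ^ 2 / ‖v‖ ^ 2 := by
    have h := hnorm x₁ hx₁
    nlinarith [sq_nonneg ‖x₁ - x₀‖]
  set r := Real.sqrt (1 - c ^ 2 / ‖v‖ ^ 2) with hr
  have hr2 : r ^ 2 = 1 - c ^ 2 / ‖v‖ ^ 2 := Real.sq_sqrt hr0
  have hrnn : 0 ≤ r := Real.sqrt_nonneg _
  have hfin : Module.finrank ℝ K = 2 := by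
    have h1 := Submodule.finrank_add_finrank_orthogonal (K := (ℝ ∙ v))
    rw [finrank_span_singleton hv] at h1
    have h2 : Module.finrank ℝ E3 = 3 := finrank_euclideanSpace_fin
    rw [← hK] at h1
    omega
  set e : OrthonormalBasis (Fin 2) ℝ K :=
    (stdOrthonormalBasis ℝ K).reindex (finCongr hfin) with he
  set E0 : E3 := ((e 0 : K) : E3) with hE0def
  set E1 : E3 := ((e 1 : K) : E3) with hE1def
  have hE0 : ‖E0‖ = 1 := by
    rw [hE0def]
    exact e.orthonormal.1 0
  have hE1 : ‖E1‖ = 1 := by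
    rw [hE1def]
    exact e.orthonormal.1 1
  set φ : ℝ → E3 :=
    fun t => x₀ + ((r * Real.cos t) • E0 + (r * Real.sin t) • E1) with hφ
  have hcover : S ⊆ φ '' Set.univ := by
    intro x hx
    set y : K := ⟨x - x₀, hyK x hx⟩ with hy
    set a := e.repr y 0 with ha
    set b := e.repr y 1 with hb
    have hsum : a • (e 0 : K) + b • (e 1 : K) = y := by
      have h := e.sum_repr y
      rwa [Fin.sum_univ_two] at h
    have hyn : ‖y‖ ^ 2 = r ^ 2 := by
      rw [hr2]
      have h := hnorm x hx
      have : ‖y‖ = ‖x - x₀‖ := rfl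
      rw [this, h]
    have hab : a ^ 2 + b ^ 2 = r ^ 2 := by
      have h1 : ‖e.repr y‖ = ‖y‖ := e.repr.norm_map y
      have h3 : ‖e.repr y‖ ^ 2 = a ^ 2 + b ^ 2 := by
        rw [EuclideanSpace.norm_eq, Real.sq_sqrt (by positivity)]
        simp [Fin.sum_univ_two, Real.norm_eq_abs, sq_abs, ← ha, ← hb]
      rw [← h3, h1, hyn]
    set z : ℂ := (a : ℂ) + (b : ℂ) * Complex.I with hz
    have habs : ‖z‖ = r := by
      rw [hz, Complex.norm_def, Complex.normSq_add_mul_I, hab, Real.sqrt_sq hrnn]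
    refine ⟨Complex.arg z, Set.mem_univ _, ?_⟩
    have hare : r * Real.cos (Complex.arg z) = a := by
      have h := Complex.norm_mul_cos_arg z
      rw [habs] at h
      simpa [hz] using h
    have haim : r * Real.sin (Complex.arg z) = b := by
      have h := Complex.norm_mul_sin_arg z
      rw [habs] at h
      simpa [hz] using h
    have hcoe : a • E0 + b • E1 = x - x₀ := by
      have h := congrArg (Subtype.val) hsum
      simpa [hE0def, hE1def] using h
    rw [hφ]
    simp only [hare, haim]
    rw [hcoe]
    abel
  have hlip : LipschitzWith (2 * r).toNNReal φ := by
    rw [lipschitzWith_iff_dist_le_mul]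
    intro s t
    rw [dist_eq_norm, Real.dist_eq]
    have hφd : φ s - φ t = (r * Real.cos s - r * Real.cos t) • E0 +
        (r * Real.sin s - r * Real.sin t) • E1 := by
      simp only [hφ, sub_smul]
      abel
    rw [hφd]
    have hA : |r * Real.cos s - r * Real.cos t| ≤ r * |s - t| := by
      have h1 : r * Real.cos s - r * Real.cos t = r * (Real.cos s - Real.cos t) := by ring
      rw [h1, abs_mul, abs_of_nonneg hrnn]
      exact mul_le_mul_of_nonneg_left (abs_cos_sub_cos_le' s t) hrnn
    have hB : |r * Real.sin s - r * Real.sin t| ≤ r * |s - t| := by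
      have h1 : r * Real.sin s - r * Real.sin t = r * (Real.sin s - Real.sin t) := by ring
      rw [h1, abs_mul, abs_of_nonneg hrnn]
      exact mul_le_mul_of_nonneg_left (abs_sin_sub_sin_le' s t) hrnn
    have hcoe : ((2 * r).toNNReal : ℝ) = 2 * r := Real.coe_toNNReal _ (by positivity)
    calc ‖(r * Real.cos s - r * Real.cos t) • E0 +
        (r * Real.sin s - r * Real.sin t) • E1‖
        ≤ ‖(r * Real.cos s - r * Real.cos t) • E0‖ +
          ‖(r * Real.sin s - r * Real.sin t) • E1‖ := norm_add_le _ _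
      _ = |r * Real.cos s - r * Real.cos t| + |r * Real.sin s - r * Real.sin t| := by
          rw [norm_smul, norm_smul, hE0, hE1, Real.norm_eq_abs, Real.norm_eq_abs]
          ring
      _ ≤ r * |s - t| + r * |s - t| := add_le_add hA hB
      _ = ((2 * r).toNNReal : ℝ) * |s - t| := by rw [hcoe]; ring
  have hdim : dimH S ≤ 1 :=
    calc dimH S ≤ dimH (φ '' Set.univ) := dimH_mono hcover
      _ ≤ dimH (Set.univ : Set ℝ) := hlip.dimH_image_le Set.univ
      _ = 1 := Real.dimH_univ
  have hzero : μH[((2 : NNReal) : ℝ)] S = 0 :=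
    hausdorffMeasure_of_dimH_lt (lt_of_le_of_lt hdim (by norm_num))
  simpa using hzero

end AuxLemmas2

section AuxLemmas3

lemma ecc_norm_inj {Q Q' : E3} (hQ : Q ≠ 0) (hQ' : Q' ≠ 0) {d : ℝ} (hd : 0 < d)
    (h : ecc Q d = ecc Q' d) : ‖Q‖ = ‖Q'‖ := by
  have ha : 0 < ‖Q‖ := norm_pos_of_ne' hQ
  have ha' : 0 < ‖Q'‖ := norm_pos_of_ne' hQ'
  have key : ∀ t t' : ℝ, 0 < t → 0 < t' →
      Real.sqrt (1 + t ^ 2) - t = Real.sqrt (1 + t' ^ 2) - t' → t = t' := by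
    intro t t' ht ht' hh
    set s := Real.sqrt (1 + t ^ 2) with hsdef
    set s' := Real.sqrt (1 + t' ^ 2) with hsdef'
    have h1 : s ^ 2 = 1 + t ^ 2 := Real.sq_sqrt (by positivity)
    have h2 : s' ^ 2 = 1 + t' ^ 2 := Real.sq_sqrt (by positivity)
    have h3 : 0 ≤ s := Real.sqrt_nonneg _
    have h4 : 0 ≤ s' := Real.sqrt_nonneg _
    have h5 : t < s := by nlinarith
    have h6 : t' < s' := by nlinarith
    have h7 : (s - t) * (s + t) = (s' - t') * (s' + t') := by nlinarith
    rw [hh] at h7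
    have h8 : s' - t' ≠ 0 := by rw [← hh]; linarith
    have h9 : s + t = s' + t' := mul_left_cancel₀ h8 h7
    linarith
  have heq : Real.sqrt (1 + (d / ‖Q‖) ^ 2) - d / ‖Q‖
      = Real.sqrt (1 + (d / ‖Q'‖) ^ 2) - d / ‖Q'‖ := by
    have e1 : (d / ‖Q‖) ^ 2 = d ^ 2 / ‖Q‖ ^ 2 := by rw [div_pow]
    have e2 : (d / ‖Q'‖) ^ 2 = d ^ 2 / ‖Q'‖ ^ 2 := by rw [div_pow]
    rw [e1, e2]
    exact h
  have h10 := key (d / ‖Q‖) (d / ‖Q'‖) (by positivity) (by positivity) heq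
  rw [div_eq_div_iff ha.ne' ha'.ne'] at h10
  exact (mul_left_cancel₀ hd.ne' h10).symm

lemma pair_null {Q Q' : E3} (hQ : Q ≠ 0) (hQ' : Q' ≠ 0) (hne : Q ≠ Q')
    {d d' : ℝ} (hd : 0 < d) (hd' : 0 < d') :
    μH[2] {x : E3 | ‖x‖ = 1 ∧ polarRadius Q d x = polarRadius Q' d' x} = 0 := by
  set v : E3 := (d * ecc Q' d') • axisDir Q' - (d' * ecc Q d) • axisDir Q with hv
  have hsub : {x : E3 | ‖x‖ = 1 ∧ polarRadius Q d x = polarRadius Q' d' x}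
      ⊆ {x : E3 | ‖x‖ = 1 ∧ rinner x v = d - d'} := by
    rintro x ⟨hx1, hx2⟩
    refine ⟨hx1, ?_⟩
    have h1 := denom_pos hQ hd hx1
    have h2 := denom_pos hQ' hd' hx1
    rw [polarRadius, polarRadius, div_eq_div_iff h1.ne' h2.ne'] at hx2
    have h3 : rinner x v = d * (ecc Q' d' * rinner x (axisDir Q'))
        - d' * (ecc Q d * rinner x (axisDir Q)) := by
      rw [hv, rinner, inner_sub_right, real_inner_smul_right, real_inner_smul_right]
      rw [rinner, rinner]
      ring
    rw [h3]
    nlinarith [hx2]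
  by_cases hv0 : v = 0
  · by_cases hdd : d = d'
    · exfalso
      subst hdd
      rw [hv, sub_eq_zero] at hv0
      have hnorm : d * ecc Q' d = d * ecc Q d := by
        have h := congrArg norm hv0
        rw [norm_smul, norm_smul, norm_axisDir hQ', norm_axisDir hQ] at h
        simp only [mul_one, Real.norm_eq_abs] at h
        rw [abs_of_pos (mul_pos hd (ecc_pos hQ' d)),
          abs_of_pos (mul_pos hd (ecc_pos hQ d))] at h
        exact h
      have hecc : ecc Q' d = ecc Q d := by
        have := mul_left_cancel₀ hd.ne' hnorm
        exact this
      have hdir : axisDir Q' = axisDir Q := by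
        rw [hecc] at hv0
        exact smul_right_injective E3 (mul_pos hd (ecc_pos hQ d)).ne' hv0
      have hnn : ‖Q‖ = ‖Q'‖ := ecc_norm_inj hQ hQ' hd hecc.symm
      apply hne
      have hQa : Q = ‖Q‖ • axisDir Q := by
        rw [axisDir, smul_inv_smul₀ (norm_ne_zero_iff.2 hQ)]
      have hQa' : Q' = ‖Q'‖ • axisDir Q' := by
        rw [axisDir, smul_inv_smul₀ (norm_ne_zero_iff.2 hQ')]
      rw [hQa, hQa', hnn, hdir]
    · refine measure_mono_null hsub ?_
      have hempty : {x : E3 | ‖x‖ = 1 ∧ rinner x v = d - d'} = ∅ := by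
        ext x
        simp only [Set.mem_setOf_eq, Set.mem_empty_iff_false, iff_false, not_and]
        intro _
        rw [hv0]
        simp only [rinner, inner_zero_right]
        intro h
        exact hdd (by linarith)
      rw [hempty]
      exact measure_empty
  · exact measure_mono_null hsub (sphere_plane_null v hv0 _)

lemma rinner_normal_nonneg {Q x : E3} (hQ : Q ≠ 0) {d : ℝ} (hd : 0 < d)
    (hx : ‖x‖ = 1) : 0 ≤ rinner x (normalVec Q d x) := by
  rw [normalVec, rinner, real_inner_smul_right]
  apply mul_nonneg (inv_nonneg.2 (norm_nonneg _))
  rw [inner_sub_right, real_inner_smul_right, real_inner_self_eq_norm_sq, hx]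
  have := denom_pos hQ hd hx
  rw [rinner] at this
  nlinarith

lemma abs_rinner_normal_le (Q x : E3) (d : ℝ) (hx : ‖x‖ = 1) :
    |rinner x (normalVec Q d x)| ≤ 1 := by
  have h := abs_real_inner_le_norm x (normalVec Q d x)
  have hn : ‖normalVec Q d x‖ ≤ 1 := by
    rw [normalVec, norm_smul, norm_inv, norm_norm]
    rcases eq_or_ne (x - ecc Q d • axisDir Q) 0 with h0 | h0
    · rw [h0]; simp
    · rw [inv_mul_cancel₀ (norm_ne_zero_iff.2 h0)]
  rw [rinner]
  calc |inner ℝ x (normalVec Q d x)| ≤ ‖x‖ * ‖normalVec Q d x‖ := h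
    _ ≤ 1 := by rw [hx, one_mul]; exact hn

lemma measurable_polar (Q : E3) (d : ℝ) : Measurable (polarRadius Q d) := by
  show Measurable fun x : E3 => d / (1 - ecc Q d * inner ℝ x (axisDir Q))
  exact measurable_const.div
    (measurable_const.sub (measurable_const.mul (measurable_id.inner measurable_const)))

lemma measurable_discRho {N : ℕ} (P : Fin N → E3) (w : Fin N → ℝ) :
    Measurable (discRho P w) := by
  show Measurable fun x : E3 => ⨅ i, polarRadius (P i) (w i) x
  exact Measurable.iInf fun j => measurable_polar _ _

lemma measurable_normal_part (Q : E3) (d : ℝ) :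
    Measurable fun x : E3 => rinner x (normalVec Q d x) := by
  simp only [normalVec, rinner]
  have h1 : Measurable fun x : E3 => x - ecc Q d • axisDir Q :=
    measurable_id.sub measurable_const
  exact measurable_id.inner ((h1.norm.inv).smul h1)

end AuxLemmas3

section MainLemma

set_option maxHeartbeats 1000000 in
lemma discMu_mono (Ω : Set E3) (hΩ : Ω ⊆ sphere2) {N : ℕ}
    (P : Fin N → E3) (hP : ∀ j, P j ≠ 0) (hPinj : Function.Injective P)
    (w u : Fin N → ℝ) (hw : ∀ j, 0 < w j) (hu : ∀ j, 0 < u j)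
    (hwu : ∀ j, w j ≤ u j) (i : Fin N) (hik : w i = u i)
    (f : E3 → ℝ) (hf0 : ∀ x ∈ closure Ω, 0 ≤ f x)
    (hfi : IntegrableOn f (closure Ω) μH[2]) :
    discMu Ω P w f {i} ≤ discMu Ω P u f {i} := by
  haveI : Nonempty (Fin N) := ⟨i⟩
  have hcl : closure Ω ⊆ sphere2 := closure_minimal hΩ Metric.isClosed_sphere
  have hsph : ∀ x ∈ closure Ω, ‖x‖ = 1 := by
    intro x hx
    have h := hcl hx
    rwa [sphere2, mem_sphere_zero_iff_norm] at h
  set Tw := discTracing Ω P w {i} with hTwdef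
  set Tu := discTracing Ω P u {i} with hTudef
  have hmemw : ∀ x, x ∈ Tw ↔ x ∈ closure Ω ∧
      discRho P w x = polarRadius (P i) (w i) x := by
    intro x
    simp [hTwdef, discTracing]
  have hmemu : ∀ x, x ∈ Tu ↔ x ∈ closure Ω ∧
      discRho P u x = polarRadius (P i) (u i) x := by
    intro x
    simp [hTudef, discTracing]
  have hrw : ∀ x, ‖x‖ = 1 → discRho P w x ≤ discRho P u x := by
    intro x hx
    exact ciInf_mono (Set.Finite.bddBelow (Set.finite_range _))
      (fun j => polar_mono (hP j) hx (hw j) (hwu j))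
  have hTsub : ∀ x ∈ Tw, x ∈ Tu ∧ discRho P w x = discRho P u x := by
    intro x hx
    obtain ⟨hx1, hx2⟩ := (hmemw x).1 hx
    have hx3 : ‖x‖ = 1 := hsph x hx1
    have h5 : discRho P u x ≤ polarRadius (P i) (u i) x :=
      ciInf_le (Set.Finite.bddBelow (Set.finite_range _)) i
    have h6 : discRho P w x ≤ discRho P u x := hrw x hx3
    have h7 : polarRadius (P i) (u i) x = polarRadius (P i) (w i) x := by rw [← hik]
    have h8 : discRho P w x = discRho P u x := by
      apply le_antisymm h6
      rw [hx2, ← h7]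
      exact h5
    exact ⟨(hmemu x).2 ⟨hx1, by rw [← h8, hx2, h7]⟩, h8⟩
  set Bad : Set E3 := ⋃ j : Fin N, ⋃ _ : j ≠ i,
      ({x : E3 | ‖x‖ = 1 ∧ polarRadius (P i) (w i) x = polarRadius (P j) (w j) x} ∪
       {x : E3 | ‖x‖ = 1 ∧ polarRadius (P i) (u i) x = polarRadius (P j) (u j) x})
    with hBadDef
  have hBad : μH[2] Bad = 0 := by
    refine measure_iUnion_null fun j => measure_iUnion_null fun hj => ?_
    have hne : P i ≠ P j := hPinj.ne (Ne.symm hj)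
    exact measure_union_null (pair_null (hP i) (hP j) hne (hw i) (hw j))
      (pair_null (hP i) (hP j) hne (hu i) (hu j))
  have hBadmemw : ∀ x, ‖x‖ = 1 → x ∉ Bad → ∀ j, j ≠ i →
      polarRadius (P i) (w i) x ≠ polarRadius (P j) (w j) x := by
    intro x hx hxB j hj hcontra
    exact hxB (Set.mem_iUnion.2 ⟨j, Set.mem_iUnion.2 ⟨hj, Or.inl ⟨hx, hcontra⟩⟩⟩)
  have hBadmemu : ∀ x, ‖x‖ = 1 → x ∉ Bad → ∀ j, j ≠ i →
      polarRadius (P i) (u i) x ≠ polarRadius (P j) (u j) x := by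
    intro x hx hxB j hj hcontra
    exact hxB (Set.mem_iUnion.2 ⟨j, Set.mem_iUnion.2 ⟨hj, Or.inr ⟨hx, hcontra⟩⟩⟩)
  have hchoose : ∀ (v : Fin N → ℝ) (x : E3),
      discRho P v x = polarRadius (P i) (v i) x →
      (∀ j, j ≠ i → polarRadius (P i) (v i) x ≠ polarRadius (P j) (v j) x) →
      discNu P v x = normalVec (P i) (v i) x := by
    intro v x hxi huniq
    have hex : ∃ j, discRho P v x = polarRadius (P j) (v j) x := ⟨i, hxi⟩
    rw [discNu, dif_pos hex]
    by_cases hji : hex.choose = i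
    · rw [hji]
    · exact absurd (hxi.symm.trans hex.choose_spec) (huniq _ hji)
  set G : E3 → ℝ := fun x =>
    f x * rinner x (normalVec (P i) (u i) x) / polarRadius (P i) (u i) x ^ 2
    with hGdef
  have hmTw : MeasurableSet Tw := by
    have he : Tw = closure Ω ∩ {x | discRho P w x = polarRadius (P i) (w i) x} :=
      Set.ext fun x => by rw [hmemw x]; rfl
    rw [he]
    exact isClosed_closure.measurableSet.inter
      (measurableSet_eq_fun (measurable_discRho P w) (measurable_polar _ _))
  have hmTu : MeasurableSet Tu := by
    have he : Tu = closure Ω ∩ {x | discRho P u x = polarRadius (P i) (u i) x} :=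
      Set.ext fun x => by rw [hmemu x]; rfl
    rw [he]
    exact isClosed_closure.measurableSet.inter
      (measurableSet_eq_fun (measurable_discRho P u) (measurable_polar _ _))
  have hTuΩ : Tu ⊆ closure Ω := fun x hx => ((hmemu x).1 hx).1
  have hGw : ∀ x ∈ Tw, x ∉ Bad →
      f x * rinner x (discNu P w x) / discRho P w x ^ 2 = G x := by
    intro x hxT hxB
    obtain ⟨hx1, hx2⟩ := (hmemw x).1 hxT
    have hx3 := hsph x hx1
    have h1 : discNu P w x = normalVec (P i) (w i) x :=
      hchoose w x hx2 (hBadmemw x hx3 hxB)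
    have h2 := (hTsub x hxT).2
    obtain ⟨hxTu, _⟩ := hTsub x hxT
    obtain ⟨_, hx2u⟩ := (hmemu x).1 hxTu
    simp only [hGdef]
    rw [h1, h2, hx2u, hik]
  have hGu : ∀ x ∈ Tu, x ∉ Bad →
      f x * rinner x (discNu P u x) / discRho P u x ^ 2 = G x := by
    intro x hxT hxB
    obtain ⟨hx1, hx2⟩ := (hmemu x).1 hxT
    have hx3 := hsph x hx1
    have h1 : discNu P u x = normalVec (P i) (u i) x :=
      hchoose u x hx2 (hBadmemu x hx3 hxB)
    simp only [hGdef]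
    rw [h1, hx2]
  have hae : ∀ᵐ x ∂(μH[2] : Measure E3), x ∉ Bad :=
    (measure_eq_zero_iff_ae_notMem).1 hBad
  have hIw : discMu Ω P w f {i} = ∫ x in Tw, G x ∂μH[2] := by
    rw [discMu, ← hTwdef]
    apply setIntegral_congr_ae hmTw
    filter_upwards [hae] with x hxB hxT
    exact hGw x hxT hxB
  have hIu : discMu Ω P u f {i} = ∫ x in Tu, G x ∂μH[2] := by
    rw [discMu, ← hTudef]
    apply setIntegral_congr_ae hmTu
    filter_upwards [hae] with x hxB hxT
    exact hGu x hxT hxB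
  have hGpos : 0 ≤ᵐ[(μH[2] : Measure E3).restrict Tu] G := by
    refine (ae_restrict_iff' hmTu).2 (Filter.Eventually.of_forall ?_)
    intro x hx
    have hx1 := hTuΩ hx
    have hx3 := hsph x hx1
    apply div_nonneg
    · exact mul_nonneg (hf0 x hx1) (rinner_normal_nonneg (hP i) (hu i) hx3)
    · exact sq_nonneg _
  have hfTu : IntegrableOn f Tu μH[2] := hfi.mono_set hTuΩ
  have hH : Measurable fun x : E3 => rinner x (normalVec (P i) (u i) x) /
      polarRadius (P i) (u i) x ^ 2 :=
    (measurable_normal_part (P i) (u i)).div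
      ((measurable_polar (P i) (u i)).pow_const 2)
  have hGmeas : AEStronglyMeasurable G ((μH[2] : Measure E3).restrict Tu) := by
    have h1 : AEStronglyMeasurable f ((μH[2] : Measure E3).restrict Tu) := hfTu.1
    have h2 := h1.mul hH.aestronglyMeasurable
    apply h2.congr
    refine Filter.Eventually.of_forall fun x => ?_
    simp only [hGdef]
    simp [mul_div_assoc]
  have hGint : IntegrableOn G Tu μH[2] := by
    refine Integrable.mono' (hfTu.norm.const_mul (4 / u i ^ 2)) hGmeas ?_
    refine (ae_restrict_iff' hmTu).2 (Filter.Eventually.of_forall ?_)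
    intro x hx
    have hx1 := hTuΩ hx
    have hx3 := hsph x hx1
    have hrge : u i / 2 ≤ polarRadius (P i) (u i) x := polar_ge_half (hP i) (hu i) hx3
    have hrpos : 0 < polarRadius (P i) (u i) x := polar_pos (hP i) (hu i) hx3
    have hb : |rinner x (normalVec (P i) (u i) x)| ≤ 1 :=
      abs_rinner_normal_le _ _ _ hx3
    have hG : ‖G x‖ = |f x| * |rinner x (normalVec (P i) (u i) x)| /
        polarRadius (P i) (u i) x ^ 2 := by
      simp only [hGdef]
      rw [Real.norm_eq_abs, abs_div, abs_mul, abs_of_pos (pow_pos hrpos 2)]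
    rw [hG, div_le_iff₀ (pow_pos hrpos 2), Real.norm_eq_abs]
    have h4 : (u i / 2) ^ 2 ≤ polarRadius (P i) (u i) x ^ 2 :=
      pow_le_pow_left₀ (by linarith [hu i]) hrge 2
    have hui := hu i
    have h5 : 4 / u i ^ 2 * |f x| * (u i / 2) ^ 2 = |f x| := by
      field_simp
      ring
    have h6 : 4 / u i ^ 2 * |f x| * (u i / 2) ^ 2 ≤
        4 / u i ^ 2 * |f x| * polarRadius (P i) (u i) x ^ 2 :=
      mul_le_mul_of_nonneg_left h4 (by positivity)
    have h7 : |f x| * |rinner x (normalVec (P i) (u i) x)| ≤ |f x| * 1 :=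
      mul_le_mul_of_nonneg_left hb (abs_nonneg _)
    nlinarith [h5, h6, h7]
  have hfinal : ∫ x in Tw, G x ∂μH[2] ≤ ∫ x in Tu, G x ∂μH[2] :=
    setIntegral_mono_set hGint hGpos
      (HasSubset.Subset.eventuallyLE (fun x hx => (hTsub x hx).1))
  rw [hIw, hIu]
  exact hfinal

end MainLemma

/-- If `w = min(w₁,w₂)` componentwise, then the reflector measure of
`σ_w` at each `P_i` is at most the maximum of the measures of `σ_{w₁}` and `σ_{w₂}`. -/
theorem discrete_measure_of_min_le_max
    (Ω : Set E3) (hΩ : Ω ⊆ sphere2) (hfr : μH[2] (sphFrontier Ω) = 0)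
    (N : ℕ) (P : Fin N → E3) (hP : ∀ i, P i ≠ 0) (hPinj : Function.Injective P)
    (w₁ w₂ : Fin N → ℝ) (hw₁ : ∀ i, 0 < w₁ i) (hw₂ : ∀ i, 0 < w₂ i)
    (f : E3 → ℝ) (hf0 : ∀ x ∈ closure Ω, 0 ≤ f x)
    (hfi : IntegrableOn f (closure Ω) μH[2]) :
    ∀ i, discMu Ω P (fun j => min (w₁ j) (w₂ j)) f {i} ≤
      max (discMu Ω P w₁ f {i}) (discMu Ω P w₂ f {i}) := by
  intro i
  rcases le_total (w₁ i) (w₂ i) with h | h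
  · exact le_max_of_le_left
      (discMu_mono Ω hΩ P hP hPinj (fun j => min (w₁ j) (w₂ j)) w₁
        (fun j => lt_min (hw₁ j) (hw₂ j)) hw₁ (fun j => min_le_left _ _) i
        (min_eq_left h) f hf0 hfi)
  · exact le_max_of_le_right
      (discMu_mono Ω hΩ P hP hPinj (fun j => min (w₁ j) (w₂ j)) w₂
        (fun j => lt_min (hw₁ j) (hw₂ j)) hw₂ (fun j => min_le_right _ _) i
        (min_eq_right h) f hf0 hfi)
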